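/- Let T be a commutative domain with a derivation δ, let A = T[t; δ] be the Ore extension (so tb = bt + δ(b) for b ∈ T), and let a ∈ T be nonzero. Let C be the subring of A generated by T and at. Then a is normal in C and t·a² = a·(at + 2δ(a)), so a is right C-seminormal in A. -/
import Mathlib


/-- In an Ore extension `A = T[t;δ]` of a commutative domain `T` (so `t b = b t + δ(b)`
for `b ∈ T`), for `0 ≠ a ∈ T` and `C` the subring generated by `T` and `at`:
`a` is normal in `C`, `t a² = a(at + 2δ(a))`, and `a` is right `C`-seminormal in `A`. -/
theorem stmt12 {A : Type*} [Ring A] [IsDomain A] (T : Subring A)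
    (hcomm : ∀ x ∈ T, ∀ y ∈ T, x * y = y * x)
    (t : A) (δ : A → A)
    (hδmem : ∀ b ∈ T, δ b ∈ T)
    (hδadd : ∀ b ∈ T, ∀ c ∈ T, δ (b + c) = δ b + δ c)
    (hδmul : ∀ b ∈ T, ∀ c ∈ T, δ (b * c) = δ b * c + b * δ c)
    (hrel : ∀ b ∈ T, t * b = b * t + δ b)
    (hgen : Subring.closure ((T : Set A) ∪ {t}) = ⊤)
    (a : A) (haT : a ∈ T) (ha0 : a ≠ 0)
    (C : Subring A) (hC : C = Subring.closure ((T : Set A) ∪ {a * t})) :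
    ({x | ∃ c ∈ C, x = a * c} = {x | ∃ c ∈ C, x = c * a}) ∧
    t * a ^ 2 = a * (a * t + 2 * δ a) ∧
    (∀ r : A, ∃ k : ℕ, ∃ c ∈ C, r * a ^ k = a * c) := by
  have hTC : ∀ b ∈ T, b ∈ C := by
    intro b hb; rw [hC]; exact Subring.subset_closure (Or.inl hb)
  have hatC : a * t ∈ C := by
    rw [hC]; exact Subring.subset_closure (Or.inr rfl)
  have haC : a ∈ C := hTC a haT
  -- a moves right past elements of C
  have Q : ∀ c ∈ C, ∃ c' ∈ C, c * a = a * c' := by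
    intro c hc
    rw [hC] at hc
    induction hc using Subring.closure_induction with
    | mem x hx =>
      rcases hx with hx | hx
      · exact ⟨x, hTC x hx, hcomm x hx a haT⟩
      · refine ⟨a * t + δ a, add_mem hatC (hTC _ (hδmem a haT)), ?_⟩
        rw [Set.mem_singleton_iff] at hx
        subst hx
        rw [mul_assoc, hrel a haT]
    | zero => exact ⟨0, zero_mem C, by simp⟩
    | one => exact ⟨1, one_mem C, by simp⟩
    | add x y hx hy ihx ihy =>
      obtain ⟨x', hx', hxe⟩ := ihx
      obtain ⟨y', hy', hye⟩ := ihy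
      exact ⟨x' + y', add_mem hx' hy', by rw [add_mul, hxe, hye, mul_add]⟩
    | neg x hx ihx =>
      obtain ⟨x', hx', hxe⟩ := ihx
      exact ⟨-x', neg_mem hx', by rw [neg_mul, hxe, mul_neg]⟩
    | mul x y hx hy ihx ihy =>
      obtain ⟨x', hx', hxe⟩ := ihx
      obtain ⟨y', hy', hye⟩ := ihy
      exact ⟨x' * y', mul_mem hx' hy', by
        rw [mul_assoc, hye, ← mul_assoc, hxe, mul_assoc]⟩
  -- a moves left past elements of C
  have P : ∀ c ∈ C, ∃ c' ∈ C, a * c = c' * a := by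
    intro c hc
    rw [hC] at hc
    induction hc using Subring.closure_induction with
    | mem x hx =>
      rcases hx with hx | hx
      · exact ⟨x, hTC x hx, (hcomm x hx a haT).symm⟩
      · refine ⟨a * t - δ a, sub_mem hatC (hTC _ (hδmem a haT)), ?_⟩
        rw [Set.mem_singleton_iff] at hx
        subst hx
        have h1 : (a * t - δ a) * a = a * (t * a) - δ a * a := by
          rw [sub_mul, mul_assoc]
        rw [h1, hrel a haT, mul_add, hcomm (δ a) (hδmem a haT) a haT]
        abel
    | zero => exact ⟨0, zero_mem C, by simp⟩
    | one => exact ⟨1, one_mem C, by simp⟩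
    | add x y hx hy ihx ihy =>
      obtain ⟨x', hx', hxe⟩ := ihx
      obtain ⟨y', hy', hye⟩ := ihy
      exact ⟨x' + y', add_mem hx' hy', by rw [mul_add, hxe, hye, add_mul]⟩
    | neg x hx ihx =>
      obtain ⟨x', hx', hxe⟩ := ihx
      exact ⟨-x', neg_mem hx', by rw [mul_neg, hxe, neg_mul]⟩
    | mul x y hx hy ihx ihy =>
      obtain ⟨x', hx', hxe⟩ := ihx
      obtain ⟨y', hy', hye⟩ := ihy
      exact ⟨x' * y', mul_mem hx' hy', by
        rw [← mul_assoc, hxe, mul_assoc, hye, mul_assoc]⟩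
  -- iterated version of Q
  have Qk : ∀ k : ℕ, ∀ c ∈ C, ∃ c' ∈ C, c * a ^ k = a ^ k * c' := by
    intro k
    induction k with
    | zero => intro c hc; exact ⟨c, hc, by simp⟩
    | succ n ih =>
      intro c hc
      obtain ⟨c', hc', he⟩ := ih c hc
      obtain ⟨c'', hc'', he'⟩ := Q c' hc'
      refine ⟨c'', hc'', ?_⟩
      rw [pow_succ, ← mul_assoc, he, mul_assoc, he', ← mul_assoc]
  have hpart2 : t * a ^ 2 = a * (a * t + 2 * δ a) := by
    have h1 : t * a ^ 2 = (t * a) * a := by rw [sq, mul_assoc]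
    rw [h1, hrel a haT, add_mul, mul_assoc, hrel a haT,
      hcomm (δ a) (hδmem a haT) a haT, mul_add, ← mul_add, ← mul_add,
      add_assoc, ← two_mul]
  refine ⟨?_, hpart2, ?_⟩
  · ext x
    simp only [Set.mem_setOf_eq]
    constructor
    · rintro ⟨c, hc, rfl⟩
      obtain ⟨c', hc', he⟩ := P c hc
      exact ⟨c', hc', he⟩
    · rintro ⟨c, hc, rfl⟩
      obtain ⟨c', hc', he⟩ := Q c hc
      exact ⟨c', hc', he⟩
  · intro r
    have hr : r ∈ Subring.closure ((T : Set A) ∪ {t}) := by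
      rw [hgen]; trivial
    induction hr using Subring.closure_induction with
    | mem x hx =>
      rcases hx with hx | hx
      · exact ⟨1, x, hTC x hx, by rw [pow_one, hcomm x hx a haT]⟩
      · rw [Set.mem_singleton_iff] at hx
        refine ⟨2, a * t + 2 * δ a,
          add_mem hatC (show 2 * δ a ∈ C by
            rw [two_mul]
            exact add_mem (hTC _ (hδmem a haT)) (hTC _ (hδmem a haT))), ?_⟩
        rw [hx]; exact hpart2
    | zero => exact ⟨0, 0, zero_mem C, by simp⟩
    | one => exact ⟨1, 1, one_mem C, by simp⟩
    | add x y hx hy ihx ihy =>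
      obtain ⟨k₁, c₁, hc₁, he₁⟩ := ihx
      obtain ⟨k₂, c₂, hc₂, he₂⟩ := ihy
      refine ⟨max k₁ k₂, c₁ * a ^ (max k₁ k₂ - k₁) + c₂ * a ^ (max k₁ k₂ - k₂),
        add_mem (mul_mem hc₁ (pow_mem haC _)) (mul_mem hc₂ (pow_mem haC _)), ?_⟩
      calc (x + y) * a ^ max k₁ k₂
          = x * a ^ k₁ * a ^ (max k₁ k₂ - k₁) + y * a ^ k₂ * a ^ (max k₁ k₂ - k₂) := by
            rw [add_mul]
            congr 1
            · rw [mul_assoc, ← pow_add, Nat.add_sub_cancel' (le_max_left k₁ k₂)]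
            · rw [mul_assoc, ← pow_add, Nat.add_sub_cancel' (le_max_right k₁ k₂)]
        _ = a * (c₁ * a ^ (max k₁ k₂ - k₁)) + a * (c₂ * a ^ (max k₁ k₂ - k₂)) := by
            rw [he₁, he₂, mul_assoc, mul_assoc]
        _ = a * (c₁ * a ^ (max k₁ k₂ - k₁) + c₂ * a ^ (max k₁ k₂ - k₂)) := by
            rw [mul_add]
    | neg x hx ihx =>
      obtain ⟨k, c, hc, he⟩ := ihx
      exact ⟨k, -c, neg_mem hc, by rw [neg_mul, he, mul_neg]⟩
    | mul x y hx hy ihx ihy =>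
      obtain ⟨k₁, c₁, hc₁, he₁⟩ := ihx
      obtain ⟨k₂, c₂, hc₂, he₂⟩ := ihy
      obtain ⟨c₂', hc₂', he₂'⟩ := Qk k₁ c₂ hc₂
      refine ⟨k₂ + k₁, c₁ * (a * c₂'), mul_mem hc₁ (mul_mem haC hc₂'), ?_⟩
      calc x * y * a ^ (k₂ + k₁) = x * (y * a ^ k₂) * a ^ k₁ := by
            rw [pow_add, mul_assoc, mul_assoc, mul_assoc]
        _ = x * (a * c₂) * a ^ k₁ := by rw [he₂]
        _ = x * a * (c₂ * a ^ k₁) := by rw [mul_assoc, mul_assoc a c₂ (a ^ k₁), ← mul_assoc]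
        _ = x * a * (a ^ k₁ * c₂') := by rw [he₂']
        _ = (x * a ^ k₁) * (a * c₂') := by
            rw [← mul_assoc, mul_assoc x a (a ^ k₁), ← pow_succ', pow_succ,
              ← mul_assoc x (a ^ k₁) a, mul_assoc (x * a ^ k₁) a c₂']
        _ = a * (c₁ * (a * c₂')) := by rw [he₁, mul_assoc]
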